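/- The space L_n := span{L_0, L_1, ..., L_n} is an (n+1)-dimensional D-invariant subspace of ℝ[x_1, ..., x_d]: the polynomials L_0, ..., L_n are linearly independent over ℝ, and for every s ∈ {1, ..., d} and every k ∈ {0, ..., n}, the partial derivative ∂L_k/∂x_s lies in span{L_0, ..., L_n}. -/

import Mathlib

/-- The explicit breadth-one basis polynomial `L_k` (Corollary 3.4):
`L_k = ∑ (1/γ₁!) (∏_{s=2}^d ∏_{j=2}^n a_{j,s}^{γ_{s,j}}/γ_{s,j}!) x₁^{γ₁} ∏_{s=2}^d x_s^{|γ_s|}`,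
the sum being over `γ₁ ∈ ℕ` and `γ_{s,j} ∈ ℕ` with `γ₁ + ∑_{s,j} j·γ_{s,j} = k`.
Variables `x₁,…,x_d` are the coordinates `0,…,d-1` of `Fin d`; the index `s : Fin (d-1)`
stands for the variable `x_{s+2}` and `j : Fin (n-1)` for the degree weight `j+2`. -/
noncomputable def Lpoly (d n : ℕ) (hd : 1 ≤ d) (a : ℕ → ℕ → ℝ) (k : ℕ) :
    MvPolynomial (Fin d) ℝ :=
  ∑ g1 ∈ Finset.range (k + 1),
    ∑ g ∈ (Finset.Icc (0 : Fin (d - 1) → Fin (n - 1) → ℕ) fun _ _ => k).filter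
        (fun g => g1 + ∑ s, ∑ j, (j.val + 2) * g s j = k),
      MvPolynomial.C ((1 / (g1.factorial : ℝ)) *
          ∏ s, ∏ j, a (j.val + 2) (s.val + 2) ^ g s j / ((g s j).factorial : ℝ)) *
        MvPolynomial.X (⟨0, hd⟩ : Fin d) ^ g1 *
        ∏ s : Fin (d - 1),
          MvPolynomial.X (⟨s.val + 1, by have := s.isLt; omega⟩ : Fin d) ^ (∑ j, g s j)


namespace LpolyAux

open MvPolynomial Finset

variable {d n : ℕ}

def x0 (hd : 1 ≤ d) : Fin d := ⟨0, hd⟩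

def emb (s : Fin (d - 1)) : Fin d := ⟨s.val + 1, by have := s.isLt; omega⟩

lemma emb_ne_x0 (hd : 1 ≤ d) (s : Fin (d - 1)) : emb s ≠ x0 hd := by
  simp [emb, x0, Fin.ext_iff]

lemma emb_injective : Function.Injective (emb (d := d)) := by
  intro s t h
  simpa [emb, Fin.ext_iff] using h

def W (g : Fin (d - 1) → Fin (n - 1) → ℕ) : ℕ := ∑ s, ∑ j, (j.val + 2) * g s j

noncomputable def cf (a : ℕ → ℕ → ℝ) (g1 : ℕ) (g : Fin (d - 1) → Fin (n - 1) → ℕ) : ℝ :=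
  (1 / (g1.factorial : ℝ)) *
    ∏ s, ∏ j, a (j.val + 2) (s.val + 2) ^ g s j / ((g s j).factorial : ℝ)

noncomputable def U (hd : 1 ≤ d) (g1 : ℕ) (g : Fin (d - 1) → Fin (n - 1) → ℕ) : Fin d →₀ ℕ :=
  Finsupp.single (x0 hd) g1 + ∑ s, Finsupp.single (emb s) (∑ j, g s j)

def F (k m g1 : ℕ) : Finset (Fin (d - 1) → Fin (n - 1) → ℕ) :=
  (Finset.Icc (0 : Fin (d - 1) → Fin (n - 1) → ℕ) fun _ _ => m).filter
    (fun g => g1 + W g = k)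

lemma le_W (g : Fin (d - 1) → Fin (n - 1) → ℕ) (s : Fin (d - 1)) (j : Fin (n - 1)) :
    (j.val + 2) * g s j ≤ W g := by
  calc (j.val + 2) * g s j ≤ ∑ j', (j'.val + 2) * g s j' :=
        Finset.single_le_sum (f := fun j' : Fin (n-1) => (j'.val + 2) * g s j')
          (fun _ _ => Nat.zero_le _) (mem_univ _)
    _ ≤ W g := Finset.single_le_sum (f := fun s => ∑ j', (j'.val + 2) * g s j')
        (fun _ _ => Nat.zero_le _) (mem_univ _)

lemma mem_F {k m g1 : ℕ} (hkm : k ≤ m) (g : Fin (d - 1) → Fin (n - 1) → ℕ) :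
    g ∈ F (n := n) k m g1 ↔ g1 + W g = k := by
  constructor
  · intro h; exact (Finset.mem_filter.mp h).2
  · intro h
    refine Finset.mem_filter.mpr ⟨Finset.mem_Icc.mpr ⟨Pi.le_def.mpr fun s => Pi.le_def.mpr fun j => Nat.zero_le _,
      Pi.le_def.mpr fun s => Pi.le_def.mpr fun j => ?_⟩, h⟩
    have h1 := le_W g s j
    have h2 : g s j ≤ (j.val + 2) * g s j := Nat.le_mul_of_pos_left _ (by omega)
    omega

lemma F_eq {k m m' g1 : ℕ} (h : k ≤ m) (h' : k ≤ m') :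
    F (d := d) (n := n) k m g1 = F k m' g1 := by
  ext g; rw [mem_F h, mem_F h']

lemma prod_X_pow_emb {ι : Type*} (t : Finset ι) (f : ι → Fin d) (e : ι → ℕ) :
    (∏ i ∈ t, (X (f i) : MvPolynomial (Fin d) ℝ) ^ e i) =
      monomial (∑ i ∈ t, Finsupp.single (f i) (e i)) 1 := by
  classical
  induction t using Finset.induction with
  | empty => simp
  | @insert _ _ h ih =>
    rw [Finset.prod_insert h, Finset.sum_insert h, ih, X_pow_eq_monomial, monomial_mul, one_mul]

lemma term_eq (hd : 1 ≤ d) (c : ℝ) (g1 : ℕ) (E : Fin (d - 1) → ℕ) :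
    (C c : MvPolynomial (Fin d) ℝ) * X (x0 hd) ^ g1 * ∏ s, X (emb s) ^ E s =
      monomial (Finsupp.single (x0 hd) g1 + ∑ s, Finsupp.single (emb s) (E s)) c := by
  rw [C_mul_X_pow_eq_monomial, prod_X_pow_emb univ (fun s => emb s) E, monomial_mul, mul_one]

lemma Lpoly_eq (hd : 1 ≤ d) (a : ℕ → ℕ → ℝ) (k : ℕ) :
    Lpoly d n hd a k =
      ∑ g1 ∈ Finset.range (k + 1), ∑ g ∈ F (n := n) k k g1,
        monomial (U hd g1 g) (cf a g1 g) := by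
  unfold Lpoly F W U cf
  exact Finset.sum_congr rfl fun g1 _ => Finset.sum_congr rfl fun g _ =>
    term_eq hd _ g1 (fun s => ∑ j, g s j)


lemma U_apply_x0 (hd : 1 ≤ d) (g1 : ℕ) (g : Fin (d - 1) → Fin (n - 1) → ℕ) :
    U hd g1 g (x0 hd) = g1 := by
  unfold U
  rw [Finsupp.add_apply, Finsupp.single_eq_same, Finsupp.finset_sum_apply]
  rw [Finset.sum_eq_zero fun s _ => Finsupp.single_eq_of_ne' (emb_ne_x0 hd s)]
  omega

lemma U_apply_emb (hd : 1 ≤ d) (g1 : ℕ) (g : Fin (d - 1) → Fin (n - 1) → ℕ)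
    (s0 : Fin (d - 1)) : U hd g1 g (emb s0) = ∑ j, g s0 j := by
  unfold U
  rw [Finsupp.add_apply, Finsupp.single_eq_of_ne' (Ne.symm (emb_ne_x0 hd s0)),
    Finsupp.finset_sum_apply, zero_add]
  rw [Finset.sum_eq_single s0 (fun s _ hs =>
    Finsupp.single_eq_of_ne' (fun h => hs (emb_injective h))) (by simp)]
  exact Finsupp.single_eq_same

lemma U_eq_single_iff (hd : 1 ≤ d) (g1 m : ℕ) (g : Fin (d - 1) → Fin (n - 1) → ℕ) :
    U hd g1 g = Finsupp.single (x0 hd) m ↔ g1 = m ∧ g = 0 := by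
  constructor
  · intro h
    have h1 : g1 = m := by
      have := congrArg (fun u => u (x0 hd)) h
      simpa [U_apply_x0] using this
    refine ⟨h1, funext fun s => funext fun j => ?_⟩
    have h2 : (∑ j', g s j') = 0 := by
      have := congrArg (fun u => u (emb s)) h
      simpa [U_apply_emb, Finsupp.single_eq_of_ne' (Ne.symm (emb_ne_x0 hd s))] using this
    have := (Finset.sum_eq_zero_iff.mp h2) j (mem_univ j)
    simpa using this
  · rintro ⟨rfl, rfl⟩
    unfold U
    simp

lemma coeff_single_x0 (hd : 1 ≤ d) (a : ℕ → ℕ → ℝ) (m k : ℕ) :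
    coeff (Finsupp.single (x0 hd) m) (Lpoly d n hd a k) =
      if m = k then (1 / (k.factorial : ℝ)) else 0 := by
  rw [Lpoly_eq]
  rw [coeff_sum]
  simp only [coeff_sum, coeff_monomial]
  by_cases hmk : m = k
  · subst hmk
    rw [if_pos rfl]
    rw [Finset.sum_eq_single m]
    · rw [Finset.sum_eq_single (0 : Fin (d - 1) → Fin (n - 1) → ℕ)]
      · rw [if_pos ((U_eq_single_iff hd m m 0).mpr ⟨rfl, rfl⟩)]
        unfold cf; simp
      · intro g hg hgne
        rw [if_neg]
        intro h
        exact hgne ((U_eq_single_iff hd m m g).mp h).2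
      · intro h0
        exact absurd ((mem_F le_rfl 0).mpr (by simp [W])) h0
    · intro g1 hg1 hg1ne
      refine Finset.sum_eq_zero fun g hg => ?_
      rw [if_neg]
      intro h
      exact hg1ne ((U_eq_single_iff hd g1 m g).mp h).1
    · intro h; exact absurd (Finset.self_mem_range_succ m) h
  · rw [if_neg hmk]
    refine Finset.sum_eq_zero fun g1 hg1 => Finset.sum_eq_zero fun g hg => ?_
    rw [if_neg]
    intro h
    obtain ⟨rfl, rfl⟩ := (U_eq_single_iff hd g1 m g).mp h
    have := (mem_F le_rfl (0 : Fin (d-1) → Fin (n-1) → ℕ)).mp hg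
    simp [W] at this
    exact hmk this


lemma U_succ_sub (hd : 1 ≤ d) (g1 : ℕ) (g : Fin (d - 1) → Fin (n - 1) → ℕ) :
    U hd (g1 + 1) g - Finsupp.single (x0 hd) 1 = U hd g1 g := by
  unfold U
  rw [add_comm (Finsupp.single (x0 hd) (g1 + 1)),
    add_tsub_assoc_of_le (Finsupp.single_le_single.mpr (by omega)),
    ← Finsupp.single_tsub]
  rw [add_comm]
  norm_num

lemma cf_succ (a : ℕ → ℕ → ℝ) (g1 : ℕ) (g : Fin (d - 1) → Fin (n - 1) → ℕ) :
    cf a (g1 + 1) g * ((g1 : ℝ) + 1) = cf a g1 g := by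
  unfold cf
  rw [Nat.factorial_succ]
  have h1 : (g1.factorial : ℝ) ≠ 0 := Nat.cast_ne_zero.mpr g1.factorial_ne_zero
  have h2 : (g1 : ℝ) + 1 ≠ 0 := by positivity
  push_cast
  field_simp

lemma pderiv_x0_Lpoly (hd : 1 ≤ d) (a : ℕ → ℕ → ℝ) (k : ℕ) :
    pderiv (x0 hd) (Lpoly d n hd a (k + 1)) = Lpoly d n hd a k := by
  rw [Lpoly_eq, Lpoly_eq]
  rw [map_sum]
  simp only [map_sum, pderiv_monomial, U_apply_x0]
  rw [Finset.sum_range_succ']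
  have h0 : (∑ g ∈ F (d := d) (n := n) (k+1) (k+1) 0,
      monomial (U hd 0 g - Finsupp.single (x0 hd) 1) (cf a 0 g * ((0 : ℕ) : ℝ))) = 0 := by
    refine Finset.sum_eq_zero fun g _ => ?_
    simp
  rw [h0, add_zero]
  refine Finset.sum_congr rfl fun g1 _ => ?_
  have hF : F (d := d) (n := n) (k+1) (k+1) (g1+1) = F k k g1 := by
    ext g
    rw [mem_F le_rfl, mem_F le_rfl]
    omega
  rw [hF]
  refine Finset.sum_congr rfl fun g _ => ?_
  rw [U_succ_sub]
  congr 1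
  push_cast
  exact cf_succ a g1 g


variable {s0 : Fin (d - 1)} {j : Fin (n - 1)}

/-- the indicator function `e_{s0,j}`. -/
def ee (s0 : Fin (d - 1)) (j : Fin (n - 1)) : Fin (d - 1) → Fin (n - 1) → ℕ :=
  fun s j' => if s = s0 ∧ j' = j then 1 else 0

lemma sum_ee (s : Fin (d - 1)) : (∑ j', ee s0 j s j') = if s = s0 then 1 else 0 := by
  unfold ee
  by_cases h : s = s0 <;> simp [h]

lemma W_add_ee (g : Fin (d - 1) → Fin (n - 1) → ℕ) :
    W (fun s j' => g s j' + ee s0 j s j') = W g + (j.val + 2) := by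
  unfold W ee
  simp only [mul_add, Finset.sum_add_distrib, mul_ite, mul_one, mul_zero]
  congr 1
  rw [Finset.sum_congr rfl (fun s _ => Finset.sum_congr rfl (fun j' _ =>
    (by by_cases h1 : s = s0 <;> by_cases h2 : j' = j <;> simp [h1, h2] :
      (if s = s0 ∧ j' = j then j'.val + 2 else 0) =
        if s = s0 then (if j' = j then j.val + 2 else 0) else 0)))]
  simp

lemma U_add_ee (hd : 1 ≤ d) (g1 : ℕ) (g : Fin (d - 1) → Fin (n - 1) → ℕ) :
    U hd g1 (fun s j' => g s j' + ee s0 j s j') =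
      U hd g1 g + Finsupp.single (emb s0) 1 := by
  unfold U
  rw [add_assoc]
  congr 1
  have h1 : ∀ s : Fin (d - 1), (∑ j', (g s j' + ee s0 j s j')) =
      (∑ j', g s j') + (if s = s0 then 1 else 0) := by
    intro s; rw [Finset.sum_add_distrib, sum_ee]
  rw [Finset.sum_congr rfl (fun s _ => by rw [h1 s, Finsupp.single_add])]
  rw [Finset.sum_add_distrib]
  congr 1
  have h2 : ∀ s : Fin (d - 1), Finsupp.single (emb s) (if s = s0 then 1 else 0) =
      if s = s0 then Finsupp.single (emb s0) 1 else 0 := by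
    intro s; by_cases h : s = s0 <;> simp [h]
  rw [Finset.sum_congr rfl (fun s _ => h2 s)]
  simp

lemma cf_add_ee (a : ℕ → ℕ → ℝ) (g1 : ℕ) (g : Fin (d - 1) → Fin (n - 1) → ℕ) :
    cf a g1 (fun s j' => g s j' + ee s0 j s j') * ((g s0 j : ℝ) + 1) =
      a (j.val + 2) (s0.val + 2) * cf a g1 g := by
  unfold cf
  suffices h : (∏ s, ∏ j', a (j'.val + 2) (s.val + 2) ^ (g s j' + ee s0 j s j') /
        (((g s j' + ee s0 j s j').factorial : ℝ))) * ((g s0 j : ℝ) + 1) =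
      a (j.val + 2) (s0.val + 2) *
        ∏ s, ∏ j', a (j'.val + 2) (s.val + 2) ^ g s j' / (((g s j').factorial : ℝ)) by
    linear_combination (1 / (g1.factorial : ℝ)) * h
  rw [← Fintype.prod_prod_type (f := fun p : Fin (d - 1) × Fin (n - 1) =>
      a (p.2.val + 2) (p.1.val + 2) ^ (g p.1 p.2 + ee s0 j p.1 p.2) /
        (((g p.1 p.2 + ee s0 j p.1 p.2).factorial : ℝ))),
    ← Fintype.prod_prod_type (f := fun p : Fin (d - 1) × Fin (n - 1) =>
      a (p.2.val + 2) (p.1.val + 2) ^ g p.1 p.2 / (((g p.1 p.2).factorial : ℝ)))]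
  rw [← Finset.mul_prod_erase univ _ (Finset.mem_univ ((s0, j) : Fin (d - 1) × Fin (n - 1))),
    ← Finset.mul_prod_erase univ
      (fun p : Fin (d - 1) × Fin (n - 1) =>
        a (p.2.val + 2) (p.1.val + 2) ^ g p.1 p.2 / (((g p.1 p.2).factorial : ℝ)))
      (Finset.mem_univ ((s0, j) : Fin (d - 1) × Fin (n - 1)))]
  have herase : ∀ p ∈ (Finset.univ : Finset (Fin (d - 1) × Fin (n - 1))).erase (s0, j),
      a (p.2.val + 2) (p.1.val + 2) ^ (g p.1 p.2 + ee s0 j p.1 p.2) /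
          (((g p.1 p.2 + ee s0 j p.1 p.2).factorial : ℝ)) =
        a (p.2.val + 2) (p.1.val + 2) ^ g p.1 p.2 / (((g p.1 p.2).factorial : ℝ)) := by
    intro p hp
    have hne : ¬(p.1 = s0 ∧ p.2 = j) := by
      intro hc
      exact (Finset.mem_erase.mp hp).1 (Prod.ext hc.1 hc.2)
    simp [ee, hne]
  rw [Finset.prod_congr rfl herase]
  have hee1 : ee s0 j s0 j = 1 := by simp [ee]
  rw [hee1]
  set Q := ∏ p ∈ (Finset.univ : Finset (Fin (d - 1) × Fin (n - 1))).erase (s0, j),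
    a (p.2.val + 2) (p.1.val + 2) ^ g p.1 p.2 / (((g p.1 p.2).factorial : ℝ)) with hQ
  set m := g s0 j with hmm
  set a0 := a (j.val + 2) (s0.val + 2) with ha0
  have hfac : ((m.factorial : ℝ)) ≠ 0 := Nat.cast_ne_zero.mpr m.factorial_ne_zero
  have hm1 : ((m : ℝ) + 1) ≠ 0 := by positivity
  have key : a0 ^ (m + 1) / (((m + 1).factorial : ℝ)) * ((m : ℝ) + 1) =
      a0 * (a0 ^ m / ((m.factorial : ℝ))) := by
    rw [pow_succ, Nat.factorial_succ]
    push_cast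
    field_simp
  linear_combination Q * key


lemma inner_emb (hd : 1 ≤ d) (a : ℕ → ℕ → ℝ) (s0 : Fin (d - 1)) (k : ℕ) (j : Fin (n - 1)) :
    (∑ g1 ∈ Finset.range (k + 1), ∑ g ∈ F (n := n) k k g1,
        monomial (U hd g1 g - Finsupp.single (emb s0) 1) (cf a g1 g * (g s0 j : ℝ))) =
      if j.val + 2 ≤ k then
        C (a (j.val + 2) (s0.val + 2)) * Lpoly d n hd a (k - (j.val + 2)) else 0 := by
  by_cases h : j.val + 2 ≤ k
  · rw [if_pos h, Lpoly_eq]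
    set k' := k - (j.val + 2) with hk'
    rw [Finset.mul_sum]
    have hB : ∀ g1, C (a (j.val + 2) (s0.val + 2)) *
        (∑ g' ∈ F (n := n) k' k' g1, monomial (U hd g1 g') (cf a g1 g')) =
        ∑ g' ∈ F (n := n) k' k' g1,
          monomial (U hd g1 g') (a (j.val + 2) (s0.val + 2) * cf a g1 g') := by
      intro g1
      rw [Finset.mul_sum]
      exact Finset.sum_congr rfl fun g' _ => C_mul_monomial
    calc (∑ g1 ∈ Finset.range (k + 1), ∑ g ∈ F (n := n) k k g1,
            monomial (U hd g1 g - Finsupp.single (emb s0) 1) (cf a g1 g * (g s0 j : ℝ)))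
        = ∑ g1 ∈ Finset.range (k + 1), ∑ g' ∈ F (n := n) k' k' g1,
            monomial (U hd g1 g') (a (j.val + 2) (s0.val + 2) * cf a g1 g') := by
          refine Finset.sum_congr rfl fun g1 _ => ?_
          rw [← Finset.sum_filter_of_ne (p := fun g => g s0 j ≠ 0) (fun g _ hf hc => by
            rw [hc] at hf; simp at hf)]
          refine Finset.sum_nbij' (fun g s j' => g s j' - ee s0 j s j')
            (fun g' s j' => g' s j' + ee s0 j s j') ?_ ?_ ?_ ?_ ?_
          · intro g hg
            obtain ⟨hgF, hgne⟩ := Finset.mem_filter.mp hg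
            have hW := (mem_F le_rfl g).mp hgF
            have hrec : (fun s j' => (g s j' - ee s0 j s j') + ee s0 j s j') = g := by
              funext s j'
              unfold ee
              by_cases h1 : s = s0 ∧ j' = j
              · simp only [if_pos h1]
                obtain ⟨rfl, rfl⟩ := h1
                omega
              · simp [h1]
            have hWrec := W_add_ee (s0 := s0) (j := j) (fun s j' => g s j' - ee s0 j s j')
            rw [hrec] at hWrec
            exact (mem_F le_rfl (fun s j' => g s j' - ee s0 j s j')).mpr (by omega)
          · intro g' hg'
            have hW := (mem_F le_rfl g').mp hg'
            refine Finset.mem_filter.mpr ⟨(mem_F le_rfl _).mpr ?_, ?_⟩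
            · rw [W_add_ee]; omega
            · simp [ee]
          · intro g hg
            obtain ⟨hgF, hgne⟩ := Finset.mem_filter.mp hg
            funext s j'
            unfold ee
            by_cases h1 : s = s0 ∧ j' = j
            · simp only [if_pos h1]
              obtain ⟨rfl, rfl⟩ := h1
              omega
            · simp [h1]
          · intro g' _
            funext s j'
            unfold ee
            by_cases h1 : s = s0 ∧ j' = j <;> simp [h1]
          · intro g hg
            obtain ⟨hgF, hgne⟩ := Finset.mem_filter.mp hg
            have hrec : (fun s j' => (g s j' - ee s0 j s j') + ee s0 j s j') = g := by
              funext s j'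
              unfold ee
              by_cases h1 : s = s0 ∧ j' = j
              · simp only [if_pos h1]
                obtain ⟨rfl, rfl⟩ := h1
                omega
              · simp [h1]
            conv_lhs => rw [← hrec]
            rw [U_add_ee, add_tsub_cancel_right]
            congr 1
            have hb2 : ((fun s j' => g s j' - ee s0 j s j' + ee s0 j s j') s0 j)
                = (g s0 j - ee s0 j s0 j) + 1 := by simp [ee]
            rw [hb2]
            push_cast
            exact cf_add_ee a g1 (fun s j' => g s j' - ee s0 j s j')
      _ = ∑ g1 ∈ Finset.range (k' + 1), ∑ g' ∈ F (n := n) k' k' g1,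
            monomial (U hd g1 g') (a (j.val + 2) (s0.val + 2) * cf a g1 g') := by
          refine (Finset.sum_subset (Finset.range_subset_range.mpr (by omega)) ?_).symm
          intro g1 hg1 hg1'
          refine Finset.sum_eq_zero fun g' hg' => ?_
          have := (mem_F le_rfl g').mp hg'
          simp only [Finset.mem_range] at hg1 hg1'
          omega
      _ = ∑ g1 ∈ Finset.range (k' + 1), C (a (j.val + 2) (s0.val + 2)) *
            ∑ g' ∈ F (n := n) k' k' g1, monomial (U hd g1 g') (cf a g1 g') := by
          exact Finset.sum_congr rfl fun g1 _ => (hB g1).symm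
  · rw [if_neg h]
    refine Finset.sum_eq_zero fun g1 _ => Finset.sum_eq_zero fun g hg => ?_
    have hW := (mem_F le_rfl g).mp hg
    have hle := le_W g s0 j
    have hz : g s0 j = 0 := by
      by_contra hc
      have h1 : 1 ≤ g s0 j := Nat.pos_of_ne_zero hc
      have h2 : j.val + 2 ≤ (j.val + 2) * g s0 j := Nat.le_mul_of_pos_right _ h1
      omega
    simp [hz]

lemma pderiv_emb_Lpoly (hd : 1 ≤ d) (a : ℕ → ℕ → ℝ) (s0 : Fin (d - 1)) (k : ℕ) :
    pderiv (emb s0) (Lpoly d n hd a k) =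
      ∑ j ∈ Finset.univ.filter (fun j : Fin (n - 1) => j.val + 2 ≤ k),
        C (a (j.val + 2) (s0.val + 2)) * Lpoly d n hd a (k - (j.val + 2)) := by
  rw [Lpoly_eq, Finset.sum_filter]
  simp only [map_sum, pderiv_monomial, U_apply_emb]
  calc (∑ g1 ∈ Finset.range (k + 1), ∑ g ∈ F (n := n) k k g1,
          monomial (U hd g1 g - Finsupp.single (emb s0) 1)
            (cf a g1 g * ((∑ j', g s0 j' : ℕ) : ℝ)))
      = ∑ g1 ∈ Finset.range (k + 1), ∑ g ∈ F (n := n) k k g1, ∑ j' : Fin (n - 1),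
          monomial (U hd g1 g - Finsupp.single (emb s0) 1) (cf a g1 g * (g s0 j' : ℝ)) := by
        refine Finset.sum_congr rfl fun g1 _ => Finset.sum_congr rfl fun g _ => ?_
        rw [Nat.cast_sum, Finset.mul_sum, map_sum]
    _ = ∑ j' : Fin (n - 1), ∑ g1 ∈ Finset.range (k + 1), ∑ g ∈ F (n := n) k k g1,
          monomial (U hd g1 g - Finsupp.single (emb s0) 1) (cf a g1 g * (g s0 j' : ℝ)) := by
        rw [Finset.sum_congr rfl (fun g1 _ => Finset.sum_comm), Finset.sum_comm]
    _ = _ := Finset.sum_congr rfl fun j' _ => inner_emb hd a s0 k j'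


lemma Lpoly_zero (hd : 1 ≤ d) (a : ℕ → ℕ → ℝ) : Lpoly d n hd a 0 = 1 := by
  rw [Lpoly_eq]
  have hF : F (d := d) (n := n) 0 0 0 = {0} := by
    ext g
    rw [mem_F le_rfl, Finset.mem_singleton]
    constructor
    · intro h
      funext s j
      have h1 := le_W g s j
      have h2 : g s j ≤ (j.val + 2) * g s j := Nat.le_mul_of_pos_left _ (by omega)
      have : W g = 0 := by omega
      simp
      omega
    · rintro rfl
      simp [W]
  rw [Finset.sum_range_one, hF, Finset.sum_singleton]
  unfold U cf
  simp

end LpolyAux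

open LpolyAux MvPolynomial in
/-- `ℒ_n = span{L_0, …, L_n}` is an `(n+1)`-dimensional `D`-invariant
subspace of `ℝ[x₁,…,x_d]`: the `L_k` are linearly independent over `ℝ`, every partial
derivative `∂L_k/∂x_s` lies in the span, and the span has dimension `n + 1`. -/
theorem Lpoly_span_D_invariant_and_dim
    (d n : ℕ) (hd : 2 ≤ d) (hn : 1 ≤ n) (a : ℕ → ℕ → ℝ) :
    LinearIndependent ℝ
      (fun k : Fin (n + 1) => Lpoly d n (by omega) a k.val) ∧
    (∀ s : Fin d, ∀ k : ℕ, k ≤ n →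
      MvPolynomial.pderiv s (Lpoly d n (by omega) a k) ∈
        Submodule.span ℝ
          (Set.range (fun k : Fin (n + 1) => Lpoly d n (by omega) a k.val))) ∧
    Module.finrank ℝ
      (Submodule.span ℝ
        (Set.range (fun k : Fin (n + 1) => Lpoly d n (by omega) a k.val))) = n + 1 := by
  have hd1 : 1 ≤ d := by omega
  have hli : LinearIndependent ℝ
      (fun k : Fin (n + 1) => Lpoly d n hd1 a k.val) := by
    rw [Fintype.linearIndependent_iff]
    intro c hc i0
    have h := congrArg (MvPolynomial.coeff (Finsupp.single (x0 hd1) i0.val)) hc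
    simp only [coeff_sum, coeff_smul, smul_eq_mul, coeff_zero, coeff_single_x0,
      Fin.val_inj] at h
    rw [Finset.sum_congr rfl (fun i _ => mul_ite (i0 = i) (c i)
      (1 / ((i.val.factorial : ℝ))) 0)] at h
    simp only [mul_zero, Finset.sum_ite_eq, Finset.mem_univ, if_true] at h
    have hf : (1 : ℝ) / (i0.val.factorial : ℝ) ≠ 0 := by
      have : (i0.val.factorial : ℝ) ≠ 0 := Nat.cast_ne_zero.mpr i0.val.factorial_ne_zero
      positivity
    rcases mul_eq_zero.mp h with h' | h'
    · exact h'
    · exact absurd h' hf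
  refine ⟨hli, ?_, ?_⟩
  · intro s k hk
    by_cases hs : s.val = 0
    · have hsx : s = x0 hd1 := Fin.ext hs
      rcases k with _ | k'
      · rw [hsx, Lpoly_zero hd1 a]
        rw [show (1 : MvPolynomial (Fin d) ℝ) = MvPolynomial.C 1 by simp, pderiv_C]
        exact Submodule.zero_mem _
      · rw [hsx, pderiv_x0_Lpoly hd1 a k']
        exact Submodule.subset_span ⟨⟨k', by omega⟩, rfl⟩
    · have hsx : s = emb ⟨s.val - 1, by have := s.isLt; omega⟩ := by
        apply Fin.ext
        simp only [emb]
        omega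
      rw [hsx, pderiv_emb_Lpoly hd1 a _ k]
      refine Submodule.sum_mem _ fun j hj => ?_
      have hjk : j.val + 2 ≤ k := (Finset.mem_filter.mp hj).2
      rw [← MvPolynomial.smul_eq_C_mul]
      exact Submodule.smul_mem _ _
        (Submodule.subset_span ⟨⟨k - (j.val + 2), by omega⟩, rfl⟩)
  · rw [finrank_span_eq_card hli]
    simp
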